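/- Let F(s) = (2/√(πs))·Γ((s+1)/2)/Γ(s/2) for s > 0, which is increasing on (0,∞) with F(2) = 1/√2. Suppose a is a unit vector in ℝⁿ with a₁ ≥ ... ≥ a_n ≥ 0, aⱼ^(-2) ≥ l₀ for all j ≥ 2 for some l₀ > 2, and a₁ ≤ 1/√2. If Haagerup's bound E|∑ aⱼεⱼ| ≥ ∑ⱼ aⱼ²F(aⱼ^(-2)) holds, then E|∑ aⱼεⱼ| ≥ (F(2) + F(l₀))/2 = 1/√2 + (F(l₀) - F(2))/2. -/

import Mathlib

open Real MeasureTheory ProbabilityTheory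

open Filter Finset Topology

lemma core_ineq {A B : ℝ} (hA : 0 < A) (hAB : A ≤ B) :
    ((A+1)*(B+1/2)/((A+1/2)*(B+1)))^2 ≤ (A+1)*B/(A*(B+1)) := by
  have hB : 0 < B := hA.trans_le hAB
  rw [div_pow, div_le_div_iff₀ (by positivity) (by positivity)]
  nlinarith [mul_nonneg (sub_nonneg.2 hAB) (by positivity : (0:ℝ) ≤ A+B+1),
    mul_pos hA hB, mul_pos (mul_pos hA hB) (mul_pos hA hB), sq_nonneg (A*B), mul_pos hA hA]

lemma prod_bound {x y : ℝ} (hx : 0 < x) (hxy : x ≤ y) (n : ℕ) :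
    (∏ j ∈ range (n+1), ((x+1+j)*(y+1/2+j)/((x+1/2+j)*(y+1+j))))^2
      ≤ y*(x+n+1)/(x*(y+n+1)) := by
  have hy : 0 < y := hx.trans_le hxy
  induction n with
  | zero =>
    simpa [mul_comm y] using core_ineq hx hxy
  | succ n ih =>
    rw [prod_range_succ, mul_pow]
    have h2 := core_ineq (A := x + (n+1)) (B := y + (n+1)) (by positivity) (by linarith)
    have hc : ((x+1+(n+1:ℕ))*(y+1/2+(n+1:ℕ))/((x+1/2+(n+1:ℕ))*(y+1+(n+1:ℕ))))^2
        ≤ (x+(n+1)+1)*(y+(n+1))/((x+(n+1))*(y+(n+1)+1)) := by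
      convert h2 using 3 <;> push_cast <;> ring
    calc (∏ j ∈ range (n+1), ((x+1+j)*(y+1/2+j)/((x+1/2+j)*(y+1+j))))^2 *
          ((x+1+(n+1:ℕ))*(y+1/2+(n+1:ℕ))/((x+1/2+(n+1:ℕ))*(y+1+(n+1:ℕ))))^2
        ≤ (y*(x+n+1)/(x*(y+n+1))) * ((x+(n+1)+1)*(y+(n+1))/((x+(n+1))*(y+(n+1)+1))) :=
          mul_le_mul ih hc (sq_nonneg _) (by positivity)
      _ = y*(x+(n+1:ℕ)+1)/(x*(y+(n+1:ℕ)+1)) := by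
          push_cast
          field_simp
          ring

lemma seq_eq_prod {x y : ℝ} (hx : 0 < x) (hy : 0 < y) {n : ℕ} (hn : 0 < n) :
    Real.GammaSeq (x+1/2) n * Real.GammaSeq (y+1) n /
      (Real.GammaSeq (x+1) n * Real.GammaSeq (y+1/2) n)
    = ∏ j ∈ range (n+1), ((x+1+j)*(y+1/2+j)/((x+1/2+j)*(y+1+j))) := by
  have hn' : (0:ℝ) < n := Nat.cast_pos.2 hn
  have A1 : (0:ℝ) < ∏ j ∈ range (n+1), (x+1/2+j) := prod_pos fun j _ => by positivity
  have A2 : (0:ℝ) < ∏ j ∈ range (n+1), (y+1+j) := prod_pos fun j _ => by positivity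
  have A3 : (0:ℝ) < ∏ j ∈ range (n+1), (x+1+j) := prod_pos fun j _ => by positivity
  have A4 : (0:ℝ) < ∏ j ∈ range (n+1), (y+1/2+j) := prod_pos fun j _ => by positivity
  have hfact : (0:ℝ) < ((n.factorial : ℕ) : ℝ) := Nat.cast_pos.2 n.factorial_pos
  have hrw : ∏ j ∈ range (n+1), ((x+1+j)*(y+1/2+j)/((x+1/2+j)*(y+1+j)))
      = ((∏ j ∈ range (n+1), (x+1+j)) * ∏ j ∈ range (n+1), (y+1/2+j)) /
        ((∏ j ∈ range (n+1), (x+1/2+j)) * ∏ j ∈ range (n+1), (y+1+j)) := by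
    rw [prod_div_distrib, prod_mul_distrib, prod_mul_distrib]
  rw [hrw]
  simp only [Real.GammaSeq]
  rw [rpow_add hn', rpow_add hn', rpow_add hn', rpow_add hn']
  have h1 : (n:ℝ) ^ (x:ℝ) ≠ 0 := (rpow_pos_of_pos hn' _).ne'
  have h2 : (n:ℝ) ^ (y:ℝ) ≠ 0 := (rpow_pos_of_pos hn' _).ne'
  have h3 : (n:ℝ) ^ (1/2:ℝ) ≠ 0 := (rpow_pos_of_pos hn' _).ne'
  have h4 : (n:ℝ) ^ (1:ℝ) ≠ 0 := (rpow_pos_of_pos hn' _).ne'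
  field_simp

lemma gamma_sqrt_mono {x y : ℝ} (hx : 0 < x) (hxy : x ≤ y) :
    Real.Gamma (x+1/2) / (Real.sqrt x * Real.Gamma x)
      ≤ Real.Gamma (y+1/2) / (Real.sqrt y * Real.Gamma y) := by
  have hy : 0 < y := hx.trans_le hxy
  have G1 : 0 < Real.Gamma (x+1/2) := Real.Gamma_pos_of_pos (by linarith)
  have G2 : 0 < Real.Gamma (y+1/2) := Real.Gamma_pos_of_pos (by linarith)
  have Gx : 0 < Real.Gamma x := Real.Gamma_pos_of_pos hx
  have Gy : 0 < Real.Gamma y := Real.Gamma_pos_of_pos hy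
  have Gx1 : 0 < Real.Gamma (x+1) := Real.Gamma_pos_of_pos (by linarith)
  have Gy1 : 0 < Real.Gamma (y+1) := Real.Gamma_pos_of_pos (by linarith)
  set T := Real.Gamma (x+1/2) * Real.Gamma (y+1) / (Real.Gamma (x+1) * Real.Gamma (y+1/2))
    with hTdef
  have hT0 : 0 ≤ T := by positivity
  -- T² ≤ y/x
  have hQ : Tendsto (fun n => (Real.GammaSeq (x+1/2) n * Real.GammaSeq (y+1) n /
      (Real.GammaSeq (x+1) n * Real.GammaSeq (y+1/2) n))^2) atTop (𝓝 (T^2)) :=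
    (((Real.GammaSeq_tendsto_Gamma (x+1/2)).mul (Real.GammaSeq_tendsto_Gamma (y+1))).div
      ((Real.GammaSeq_tendsto_Gamma (x+1)).mul (Real.GammaSeq_tendsto_Gamma (y+1/2)))
      (by positivity)).pow 2
  have hbnd : Tendsto (fun n : ℕ => y*(x+n+1)/(x*(y+n+1))) atTop (𝓝 (y/x)) := by
    have h1 : Tendsto (fun n : ℕ => (y+(n:ℝ)+1)) atTop atTop := by
      have h1' : Tendsto (fun n : ℕ => ((n:ℝ) + (y+1))) atTop atTop :=
        tendsto_atTop_add_const_right atTop (y+1) tendsto_natCast_atTop_atTop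
      exact h1'.congr fun n => by ring
    have h0 : Tendsto (fun n : ℕ => (y-x)/(y+(n:ℝ)+1)) atTop (𝓝 0) :=
      Tendsto.div_atTop tendsto_const_nhds h1
    have h2 : Tendsto (fun n : ℕ => (y/x)*(1 - (y-x)/(y+(n:ℝ)+1))) atTop (𝓝 ((y/x)*(1-0))) :=
      tendsto_const_nhds.mul (tendsto_const_nhds.sub h0)
    rw [sub_zero, mul_one] at h2
    refine h2.congr fun n => ?_
    have hd : (y+(n:ℝ)+1) ≠ 0 := by positivity
    have e : 1 - (y-x)/(y+(n:ℝ)+1) = (x+(n:ℝ)+1)/(y+(n:ℝ)+1) := by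
      field_simp; ring
    rw [e, div_mul_div_comm]
  have hle : ∀ᶠ n : ℕ in atTop, (Real.GammaSeq (x+1/2) n * Real.GammaSeq (y+1) n /
      (Real.GammaSeq (x+1) n * Real.GammaSeq (y+1/2) n))^2 ≤ y*(x+n+1)/(x*(y+n+1)) := by
    filter_upwards [eventually_gt_atTop 0] with n hn
    rw [seq_eq_prod hx hy hn]
    exact prod_bound hx hxy n
  have hT2 : T^2 ≤ y/x := le_of_tendsto_of_tendsto hQ hbnd hle
  have hTs : T ≤ Real.sqrt (y/x) := (Real.le_sqrt hT0 (by positivity)).2 hT2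
  -- unfold T
  rw [hTdef, Real.Gamma_add_one hx.ne', Real.Gamma_add_one hy.ne',
    Real.sqrt_div hy.le, div_le_div_iff₀ (by positivity) (by positivity)] at hTs
  have hsx : Real.sqrt x * Real.sqrt x = x := Real.mul_self_sqrt hx.le
  have hsy : Real.sqrt y * Real.sqrt y = y := Real.mul_self_sqrt hy.le
  have hsxp : 0 < Real.sqrt x := Real.sqrt_pos.2 hx
  have hsyp : 0 < Real.sqrt y := Real.sqrt_pos.2 hy
  rw [div_le_div_iff₀ (by positivity) (by positivity)]
  have hc : 0 < Real.sqrt x * Real.sqrt y := by positivity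
  apply le_of_mul_le_mul_right _ hc
  calc Real.Gamma (x+1/2) * (Real.sqrt y * Real.Gamma y) * (Real.sqrt x * Real.sqrt y)
      = Real.Gamma (x+1/2) * (y * Real.Gamma y) * Real.sqrt x := by
        linear_combination (Real.Gamma (x+1/2) * Real.Gamma y * Real.sqrt x) * hsy
    _ ≤ Real.sqrt y * (x * Real.Gamma x * Real.Gamma (y+1/2)) := hTs
    _ = Real.Gamma (y+1/2) * (Real.sqrt x * Real.Gamma x) * (Real.sqrt x * Real.sqrt y) := by
        linear_combination (- Real.sqrt y * Real.Gamma x * Real.Gamma (y+1/2)) * hsx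

theorem haagerup_function_bound {Ω : Type*} [MeasurableSpace Ω] (μ : Measure Ω)
    [IsProbabilityMeasure μ] (n : ℕ)
    (F : ℝ → ℝ)
    (hF : F = fun s => 2 / Real.sqrt (Real.pi * s) * (Real.Gamma ((s + 1) / 2) / Real.Gamma (s / 2)))
    (a : Fin (n + 1) → ℝ) (ha : ∑ j, a j ^ 2 = 1)
    (hmono : Antitone a) (hnonneg : ∀ j, 0 ≤ a j)
    (l₀ : ℝ) (hl₀ : 2 < l₀) (hsmall : ∀ j : Fin (n + 1), j ≠ 0 → l₀ ≤ ((a j) ^ 2)⁻¹)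
    (ha₁ : a 0 ≤ 1 / Real.sqrt 2)
    (ε : Fin (n + 1) → Ω → ℝ)
    (hεindep : iIndepFun ε μ)
    (hεdist : ∀ j, Measure.map (ε j) μ =
      (2⁻¹ : ENNReal) • (Measure.dirac (1 : ℝ) + Measure.dirac (-1 : ℝ))) :
    MonotoneOn F (Set.Ioi 0) ∧ F 2 = 1 / Real.sqrt 2 ∧
    ((∫ ω, |∑ j, a j * ε j ω| ∂μ) ≥ ∑ j, (a j) ^ 2 * F (((a j) ^ 2)⁻¹) →
      (∫ ω, |∑ j, a j * ε j ω| ∂μ) ≥ (F 2 + F l₀) / 2 ∧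
        (F 2 + F l₀) / 2 = 1 / Real.sqrt 2 + (F l₀ - F 2) / 2) := by
  have hπ : (0:ℝ) < π := Real.pi_pos
  -- rewrite F
  have hFe : ∀ s : ℝ, 0 < s → F s = Real.sqrt (2/π) *
      (Real.Gamma (s/2 + 1/2) / (Real.sqrt (s/2) * Real.Gamma (s/2))) := by
    intro s hs
    rw [hF]
    simp only
    have h1 : (s+1)/2 = s/2 + 1/2 := by ring
    have h2 : Real.sqrt (2/π) / Real.sqrt (s/2) = 2 / Real.sqrt (π*s) := by
      rw [← Real.sqrt_div (by positivity) (s/2)]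
      have h3 : (2/π)/(s/2) = 4/(π*s) := by field_simp; ring
      rw [h3, Real.sqrt_div (by norm_num) (π*s), show (4:ℝ) = 2^2 by norm_num,
        Real.sqrt_sq (by norm_num)]
    rw [h1, ← h2]
    ring
  have hmonoF : MonotoneOn F (Set.Ioi 0) := by
    intro s hs t ht hst
    rw [Set.mem_Ioi] at hs ht
    have key := gamma_sqrt_mono (x := s/2) (y := t/2) (half_pos hs) (by linarith)
    rw [hFe s hs, hFe t ht]
    exact mul_le_mul_of_nonneg_left key (Real.sqrt_nonneg _)
  have hF2 : F 2 = 1 / Real.sqrt 2 := by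
    rw [hF]
    simp only
    have h32 : ((2:ℝ)+1)/2 = 1/2 + 1 := by norm_num
    have h22 : (2:ℝ)/2 = 1 := by norm_num
    rw [h32, h22, Real.Gamma_add_one (by norm_num : (1/2:ℝ) ≠ 0), Real.Gamma_one_half_eq,
      Real.Gamma_one, Real.sqrt_mul hπ.le]
    have hsp : Real.sqrt π ≠ 0 := (Real.sqrt_pos.2 hπ).ne'
    have hs2 : Real.sqrt 2 ≠ 0 := (Real.sqrt_pos.2 (by norm_num)).ne'
    field_simp
  refine ⟨hmonoF, hF2, fun hE => ?_⟩
  -- a 0 > 0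
  have ha0pos : 0 < a 0 := by
    rcases (hnonneg 0).lt_or_eq with h | h
    · exact h
    · exfalso
      have hz : ∀ j, a j = 0 := fun j =>
        le_antisymm (by simpa [← h] using hmono (Fin.zero_le j)) (hnonneg j)
      simp [hz] at ha
  have ha0sq : a 0 ^ 2 ≤ 1/2 := by
    have h2 : (1 / Real.sqrt 2 : ℝ) ^ 2 = 1/2 := by
      rw [div_pow, Real.sq_sqrt (by norm_num : (0:ℝ) ≤ 2)]
      norm_num
    calc a 0 ^ 2 ≤ (1 / Real.sqrt 2) ^ 2 :=
          pow_le_pow_left₀ (hnonneg 0) ha₁ 2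
      _ = 1/2 := h2
  have ha0inv : 2 ≤ ((a 0) ^ 2)⁻¹ := by
    have h1 : 0 < a 0 ^ 2 := by positivity
    calc (2:ℝ) = (1/2)⁻¹ := by norm_num
      _ ≤ ((a 0)^2)⁻¹ := by
          apply inv_anti₀ h1 ha0sq
  have hFl₀2 : F 2 ≤ F l₀ := hmonoF (by norm_num) (Set.mem_Ioi.2 (by linarith)) hl₀.le
  -- lower bound for the sum
  have hsum : (F 2 + F l₀)/2 ≤ ∑ j, (a j) ^ 2 * F (((a j) ^ 2)⁻¹) := by
    have hterm0 : a 0 ^2 * F 2 ≤ a 0 ^2 * F (((a 0)^2)⁻¹) := by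
      apply mul_le_mul_of_nonneg_left _ (sq_nonneg _)
      exact hmonoF (by norm_num) (Set.mem_Ioi.2 (inv_pos.2 (pow_pos ha0pos 2))) ha0inv
    have hterms : ∀ i : Fin n, (a i.succ)^2 * F l₀ ≤ (a i.succ)^2 * F (((a i.succ)^2)⁻¹) := by
      intro i
      apply mul_le_mul_of_nonneg_left _ (sq_nonneg _)
      exact hmonoF (Set.mem_Ioi.2 (by linarith))
        (Set.mem_Ioi.2 (lt_of_lt_of_le (by linarith) (hsmall i.succ (Fin.succ_ne_zero i))))
        (hsmall i.succ (Fin.succ_ne_zero i))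
    have hsplit : ∑ j, (a j) ^ 2 * F (((a j) ^ 2)⁻¹)
        = a 0 ^2 * F (((a 0)^2)⁻¹) + ∑ i : Fin n, (a i.succ)^2 * F (((a i.succ)^2)⁻¹) :=
      Fin.sum_univ_succ _
    have hasplit : a 0 ^ 2 + ∑ i : Fin n, (a i.succ)^2 = 1 := by
      rw [← Fin.sum_univ_succ (fun j => a j ^ 2)]; exact ha
    have hstep : a 0 ^2 * F 2 + (∑ i : Fin n, (a i.succ)^2) * F l₀
        ≤ ∑ j, (a j) ^ 2 * F (((a j) ^ 2)⁻¹) := by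
      rw [hsplit, Finset.sum_mul]
      exact add_le_add hterm0 (Finset.sum_le_sum fun i _ => hterms i)
    have hrest : (∑ i : Fin n, (a i.succ)^2) = 1 - a 0 ^2 := by linarith
    rw [hrest] at hstep
    nlinarith [hstep, hFl₀2, ha0sq]
  constructor
  · linarith [hE, hsum]
  · rw [hF2]; ring
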